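/- In a discounted MDP with k = 2 actions, if π ≺ π' are two policies, then S^π is not a subset of S^{π'}. -/

import Mathlib

/-- The transition matrix induced by a policy. -/
noncomputable def polMatrix {n k : ℕ} (P : Fin n → Fin k → Fin n → ℝ)
    (π : Fin n → Fin k) : Matrix (Fin n) (Fin n) ℝ :=
  Matrix.of fun s s' => P s (π s) s'

/-- The reward vector induced by a policy. -/
noncomputable def polReward {n k : ℕ} (r : Fin n → Fin k → ℝ)
    (π : Fin n → Fin k) : Fin n → ℝ :=
  fun s => r s (π s)

/-- The value vector of a policy: `v^π = ∑_{i=0}^∞ γ^i (P^π)^i r^π`. -/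
noncomputable def polValue {n k : ℕ} (P : Fin n → Fin k → Fin n → ℝ)
    (r : Fin n → Fin k → ℝ) (γ : ℝ) (π : Fin n → Fin k) : Fin n → ℝ :=
  ∑' i : ℕ, γ ^ i • (polMatrix P π ^ i).mulVec (polReward r π)

/-- `π ⪯ π'` : the policy `π'` dominates `π`. -/
def Dominates {n k : ℕ} (P : Fin n → Fin k → Fin n → ℝ) (r : Fin n → Fin k → ℝ)
    (γ : ℝ) (π π' : Fin n → Fin k) : Prop :=
  ∀ s, polValue P r γ π s ≤ polValue P r γ π' s

/-- `π ≺ π'` : the policy `π'` strictly dominates `π`. -/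
def StrictDominates {n k : ℕ} (P : Fin n → Fin k → Fin n → ℝ) (r : Fin n → Fin k → ℝ)
    (γ : ℝ) (π π' : Fin n → Fin k) : Prop :=
  Dominates P r γ π π' ∧ ∃ s, polValue P r γ π s < polValue P r γ π' s

/-- A set of state-action pairs is well-defined if it contains each state at most once. -/
def WellDefined {n k : ℕ} (U : Set (Fin n × Fin k)) : Prop :=
  ∀ s a a', (s, a) ∈ U → (s, a') ∈ U → a = a'

-- `π ⊕ U` : the policy obtained from `π` by switching the action at `s` to `a`
-- for each `(s, a) ∈ U` (intended for well-defined `U`).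
open Classical in
noncomputable def switch {n k : ℕ} (π : Fin n → Fin k) (U : Set (Fin n × Fin k)) :
    Fin n → Fin k :=
  fun s => if h : ∃ a, (s, a) ∈ U then h.choose else π s

/-- The improvement set `T^π = {(s,a) : π ⊕ {(s,a)} ≻ π}`. -/
def improvementSet {n k : ℕ} (P : Fin n → Fin k → Fin n → ℝ) (r : Fin n → Fin k → ℝ)
    (γ : ℝ) (π : Fin n → Fin k) : Set (Fin n × Fin k) :=
  {p | StrictDominates P r γ π (Function.update π p.1 p.2)}

/-- The set of improvement states `S^π`. -/
def improvementStates {n k : ℕ} (P : Fin n → Fin k → Fin n → ℝ) (r : Fin n → Fin k → ℝ)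
    (γ : ℝ) (π : Fin n → Fin k) : Set (Fin n) :=
  {s | ∃ a, (s, a) ∈ improvementSet P r γ π}

def IsStoch {n : ℕ} (M : Matrix (Fin n) (Fin n) ℝ) : Prop :=
  (∀ s s', 0 ≤ M s s') ∧ (∀ s, ∑ s', M s s' = 1)

lemma IsStoch.mul {n : ℕ} {M N : Matrix (Fin n) (Fin n) ℝ} (hM : IsStoch M)
    (hN : IsStoch N) : IsStoch (M * N) := by
  constructor
  · intro s s'
    rw [Matrix.mul_apply]
    exact Finset.sum_nonneg fun t _ => mul_nonneg (hM.1 s t) (hN.1 t s')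
  · intro s
    simp only [Matrix.mul_apply]
    rw [Finset.sum_comm]
    simp_rw [← Finset.mul_sum, hN.2, mul_one]
    exact hM.2 s

lemma IsStoch.pow {n : ℕ} {M : Matrix (Fin n) (Fin n) ℝ} (hM : IsStoch M) (i : ℕ) :
    IsStoch (M ^ i) := by
  induction i with
  | zero =>
    constructor
    · intro s s'
      simp [Matrix.one_apply]
      split <;> norm_num
    · intro s; simp [Matrix.one_apply]
  | succ i ih => rw [pow_succ]; exact ih.mul hM

lemma IsStoch.mulVec_bound {n : ℕ} {M : Matrix (Fin n) (Fin n) ℝ} (hM : IsStoch M)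
    (v : Fin n → ℝ) (s : Fin n) : |M.mulVec v s| ≤ ‖v‖ := by
  have h : M.mulVec v s = ∑ s', M s s' * v s' := by
    simp [Matrix.mulVec, dotProduct]
  rw [h]
  calc |∑ s', M s s' * v s'| ≤ ∑ s', |M s s' * v s'| := Finset.abs_sum_le_sum_abs _ _
    _ ≤ ∑ s', M s s' * ‖v‖ := by
        apply Finset.sum_le_sum
        intro t _
        rw [abs_mul, abs_of_nonneg (hM.1 s t)]
        have : |v t| ≤ ‖v‖ := by
          rw [← Real.norm_eq_abs]; exact norm_le_pi_norm v t
        exact mul_le_mul_of_nonneg_left this (hM.1 s t)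
    _ = ‖v‖ := by rw [← Finset.sum_mul, hM.2, one_mul]

lemma summable_series {n : ℕ} {γ : ℝ} (hγ0 : 0 ≤ γ) (hγ1 : γ < 1)
    {M : Matrix (Fin n) (Fin n) ℝ} (hM : IsStoch M) (v : Fin n → ℝ) :
    Summable (fun i : ℕ => γ ^ i • (M ^ i).mulVec v) := by
  apply Summable.of_norm_bounded (g := fun i => ‖v‖ * γ ^ i)
    ((summable_geometric_of_lt_one hγ0 hγ1).mul_left _)
  intro i
  rw [norm_smul, Real.norm_eq_abs, abs_pow, abs_of_nonneg hγ0, mul_comm]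
  apply mul_le_mul_of_nonneg_right _ (pow_nonneg hγ0 i)
  rw [pi_norm_le_iff_of_nonneg (norm_nonneg v)]
  intro s
  rw [Real.norm_eq_abs]
  exact (hM.pow i).mulVec_bound v s

lemma bellman {n k : ℕ} (P : Fin n → Fin k → Fin n → ℝ) (r : Fin n → Fin k → ℝ)
    {γ : ℝ} (hγ0 : 0 ≤ γ) (hγ1 : γ < 1) (π : Fin n → Fin k)
    (hM : IsStoch (polMatrix P π)) :
    polValue P r γ π
      = polReward r π + γ • (polMatrix P π).mulVec (polValue P r γ π) := by
  set M := polMatrix P π with hMdef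
  set rv := polReward r π with hrv
  have hsum : Summable (fun i : ℕ => γ ^ i • (M ^ i).mulVec rv) :=
    summable_series hγ0 hγ1 hM rv
  have h0 : polValue P r γ π = ∑' i : ℕ, γ ^ i • (M ^ i).mulVec rv := rfl
  let L : (Fin n → ℝ) →L[ℝ] (Fin n → ℝ) :=
    LinearMap.toContinuousLinearMap (γ • M.mulVecLin)
  have hL : ∀ x, L x = γ • M.mulVec x := fun x => rfl
  have key : ∀ i : ℕ, γ ^ (i + 1) • (M ^ (i + 1)).mulVec rv
      = L (γ ^ i • (M ^ i).mulVec rv) := by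
    intro i
    rw [hL]
    have h1 : (M ^ (i + 1)).mulVec rv = M.mulVec ((M ^ i).mulVec rv) := by
      rw [pow_succ' M i, ← Matrix.mulVec_mulVec]
    rw [h1, Matrix.mulVec_smul, pow_succ, mul_comm (γ ^ i) γ, mul_smul]
  rw [h0]
  conv_lhs => rw [Summable.tsum_eq_zero_add hsum]
  congr 1
  · simp [Matrix.one_mulVec]
  · calc ∑' i : ℕ, γ ^ (i + 1) • (M ^ (i + 1)).mulVec rv
        = ∑' i : ℕ, L (γ ^ i • (M ^ i).mulVec rv) := tsum_congr key
      _ = L (∑' i : ℕ, γ ^ i • (M ^ i).mulVec rv) := (L.map_tsum hsum).symm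
      _ = γ • M.mulVec (∑' i : ℕ, γ ^ i • (M ^ i).mulVec rv) := hL _

lemma fixpoint_nonneg {n : ℕ} (hn : 1 ≤ n) {γ : ℝ} (hγ0 : 0 ≤ γ) (hγ1 : γ < 1)
    {M : Matrix (Fin n) (Fin n) ℝ} (hM : IsStoch M) {B w : Fin n → ℝ}
    (hfix : ∀ s, w s = B s + γ * M.mulVec w s) (hB : ∀ s, 0 ≤ B s) :
    ∀ s, 0 ≤ w s := by
  have hne : (Finset.univ : Finset (Fin n)).Nonempty := by
    have : Nonempty (Fin n) := Fin.pos_iff_nonempty.mp hn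
    exact Finset.univ_nonempty
  obtain ⟨s₀, -, hmin⟩ := Finset.exists_min_image Finset.univ w hne
  have hmin' : ∀ s, w s₀ ≤ w s := fun s => hmin s (Finset.mem_univ s)
  have h1 : w s₀ ≤ M.mulVec w s₀ := by
    have : M.mulVec w s₀ = ∑ s', M s₀ s' * w s' := by
      simp [Matrix.mulVec, dotProduct]
    rw [this]
    calc w s₀ = ∑ s', M s₀ s' * w s₀ := by rw [← Finset.sum_mul, hM.2, one_mul]
      _ ≤ ∑ s', M s₀ s' * w s' := by
          exact Finset.sum_le_sum fun t _ =>
            mul_le_mul_of_nonneg_left (hmin' t) (hM.1 s₀ t)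
  have h2 : w s₀ ≥ γ * w s₀ := by
    have := hfix s₀
    nlinarith [hB s₀, mul_le_mul_of_nonneg_left h1 hγ0]
  have h3 : 0 ≤ w s₀ := by nlinarith
  exact fun s => h3.trans (hmin' s)

lemma fixpoint_nonpos {n : ℕ} (hn : 1 ≤ n) {γ : ℝ} (hγ0 : 0 ≤ γ) (hγ1 : γ < 1)
    {M : Matrix (Fin n) (Fin n) ℝ} (hM : IsStoch M) {B w : Fin n → ℝ}
    (hfix : ∀ s, w s = B s + γ * M.mulVec w s) (hB : ∀ s, B s ≤ 0) :
    ∀ s, w s ≤ 0 := by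
  have hfix' : ∀ s, (-w) s = (-B) s + γ * M.mulVec (-w) s := by
    intro s
    have : M.mulVec (-w) = -(M.mulVec w) := by
      rw [Matrix.mulVec_neg]
    rw [this]
    simp only [Pi.neg_apply]
    have := hfix s
    ring_nf
    linarith [hfix s]
  have := fixpoint_nonneg hn hγ0 hγ1 hM hfix' (fun s => by simpa using hB s)
  intro s
  have := this s
  simp only [Pi.neg_apply] at this
  linarith

/-- Advantage of action `a` at state `s` relative to policy `τ`. -/
noncomputable def adv {n k : ℕ} (P : Fin n → Fin k → Fin n → ℝ) (r : Fin n → Fin k → ℝ)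
    (γ : ℝ) (τ : Fin n → Fin k) (s : Fin n) (a : Fin k) : ℝ :=
  r s a + γ * ∑ s', P s a s' * polValue P r γ τ s' - polValue P r γ τ s

lemma isStoch_pol {n k : ℕ} {P : Fin n → Fin k → Fin n → ℝ}
    (hP0 : ∀ s a s', 0 ≤ P s a s') (hP1 : ∀ s a, ∑ s', P s a s' = 1)
    (π : Fin n → Fin k) : IsStoch (polMatrix P π) :=
  ⟨fun s s' => hP0 s (π s) s', fun s => hP1 s (π s)⟩

lemma bellman' {n k : ℕ} {P : Fin n → Fin k → Fin n → ℝ} {r : Fin n → Fin k → ℝ}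
    {γ : ℝ} (hP0 : ∀ s a s', 0 ≤ P s a s') (hP1 : ∀ s a, ∑ s', P s a s' = 1)
    (hγ0 : 0 ≤ γ) (hγ1 : γ < 1) (π : Fin n → Fin k) (s : Fin n) :
    polValue P r γ π s = r s (π s) + γ * ∑ s', P s (π s) s' * polValue P r γ π s' := by
  have h := bellman P r hγ0 hγ1 π (isStoch_pol hP0 hP1 π)
  have h2 := congrFun h s
  simp only [Pi.add_apply, Pi.smul_apply, smul_eq_mul] at h2
  have hmv : (polMatrix P π).mulVec (polValue P r γ π) s
      = ∑ s', P s (π s) s' * polValue P r γ π s' := by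
    simp [Matrix.mulVec, dotProduct, polMatrix]
  rw [h2, hmv]
  rfl

lemma adv_self {n k : ℕ} {P : Fin n → Fin k → Fin n → ℝ} {r : Fin n → Fin k → ℝ}
    {γ : ℝ} (hP0 : ∀ s a s', 0 ≤ P s a s') (hP1 : ∀ s a, ∑ s', P s a s' = 1)
    (hγ0 : 0 ≤ γ) (hγ1 : γ < 1) (π : Fin n → Fin k) (s : Fin n) :
    adv P r γ π s (π s) = 0 := by
  have := bellman' (r := r) hP0 hP1 hγ0 hγ1 π s
  simp [adv]
  linarith

/-- The difference of values satisfies a fixed-point equation driven by advantages. -/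
lemma value_diff {n k : ℕ} {P : Fin n → Fin k → Fin n → ℝ} {r : Fin n → Fin k → ℝ}
    {γ : ℝ} (hP0 : ∀ s a s', 0 ≤ P s a s') (hP1 : ∀ s a, ∑ s', P s a s' = 1)
    (hγ0 : 0 ≤ γ) (hγ1 : γ < 1) (σ τ : Fin n → Fin k) (s : Fin n) :
    polValue P r γ τ s - polValue P r γ σ s
      = adv P r γ σ s (τ s)
        + γ * (polMatrix P τ).mulVec (fun t => polValue P r γ τ t - polValue P r γ σ t) s := by
  have hτ := bellman' (r := r) hP0 hP1 hγ0 hγ1 τ s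
  have hmv : (polMatrix P τ).mulVec (fun t => polValue P r γ τ t - polValue P r γ σ t) s
      = ∑ s', P s (τ s) s' * (polValue P r γ τ s' - polValue P r γ σ s') := by
    simp [Matrix.mulVec, dotProduct, polMatrix]
  rw [hmv]
  simp only [adv]
  have hsplit : ∑ s', P s (τ s) s' * (polValue P r γ τ s' - polValue P r γ σ s')
      = ∑ s', P s (τ s) s' * polValue P r γ τ s'
        - ∑ s', P s (τ s) s' * polValue P r γ σ s' := by
    rw [← Finset.sum_sub_distrib]
    congr 1; ext s'; ring
  rw [hsplit]
  linarith

section Dom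

variable {n k : ℕ} {P : Fin n → Fin k → Fin n → ℝ} {r : Fin n → Fin k → ℝ} {γ : ℝ}

lemma dom_of_adv_nonneg (hn : 1 ≤ n)
    (hP0 : ∀ s a s', 0 ≤ P s a s') (hP1 : ∀ s a, ∑ s', P s a s' = 1)
    (hγ0 : 0 ≤ γ) (hγ1 : γ < 1) (σ τ : Fin n → Fin k)
    (h : ∀ s, 0 ≤ adv P r γ σ s (τ s)) :
    ∀ s, polValue P r γ σ s ≤ polValue P r γ τ s := by
  have key := fixpoint_nonneg hn hγ0 hγ1 (isStoch_pol hP0 hP1 τ)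
    (B := fun s => adv P r γ σ s (τ s))
    (w := fun t => polValue P r γ τ t - polValue P r γ σ t)
    (fun s => value_diff (r := r) hP0 hP1 hγ0 hγ1 σ τ s) h
  intro s
  have := key s
  linarith

lemma dom_of_adv_nonpos (hn : 1 ≤ n)
    (hP0 : ∀ s a s', 0 ≤ P s a s') (hP1 : ∀ s a, ∑ s', P s a s' = 1)
    (hγ0 : 0 ≤ γ) (hγ1 : γ < 1) (σ τ : Fin n → Fin k)
    (h : ∀ s, adv P r γ σ s (τ s) ≤ 0) :
    ∀ s, polValue P r γ τ s ≤ polValue P r γ σ s := by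
  have key := fixpoint_nonpos hn hγ0 hγ1 (isStoch_pol hP0 hP1 τ)
    (B := fun s => adv P r γ σ s (τ s))
    (w := fun t => polValue P r γ τ t - polValue P r γ σ t)
    (fun s => value_diff (r := r) hP0 hP1 hγ0 hγ1 σ τ s) h
  intro s
  have := key s
  linarith

lemma strict_of_adv_pos (hn : 1 ≤ n)
    (hP0 : ∀ s a s', 0 ≤ P s a s') (hP1 : ∀ s a, ∑ s', P s a s' = 1)
    (hγ0 : 0 ≤ γ) (hγ1 : γ < 1) (σ τ : Fin n → Fin k)
    (h : ∀ s, 0 ≤ adv P r γ σ s (τ s)) {s₁ : Fin n}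
    (hs₁ : 0 < adv P r γ σ s₁ (τ s₁)) :
    polValue P r γ σ s₁ < polValue P r γ τ s₁ := by
  have hw := dom_of_adv_nonneg hn hP0 hP1 hγ0 hγ1 σ τ h
  have hd := value_diff (r := r) hP0 hP1 hγ0 hγ1 σ τ s₁
  have hmv : 0 ≤ (polMatrix P τ).mulVec
      (fun t => polValue P r γ τ t - polValue P r γ σ t) s₁ := by
    have : (polMatrix P τ).mulVec (fun t => polValue P r γ τ t - polValue P r γ σ t) s₁
        = ∑ s', P s₁ (τ s₁) s' * (polValue P r γ τ s' - polValue P r γ σ s') := by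
      simp [Matrix.mulVec, dotProduct, polMatrix]
    rw [this]
    exact Finset.sum_nonneg fun t _ =>
      mul_nonneg (hP0 s₁ (τ s₁) t) (by linarith [hw t])
  nlinarith [mul_nonneg hγ0 hmv]

/-- F1: a positive advantage yields a strict single-switch improvement. -/
lemma mem_improvementSet_of_adv_pos (hn : 1 ≤ n)
    (hP0 : ∀ s a s', 0 ≤ P s a s') (hP1 : ∀ s a, ∑ s', P s a s' = 1)
    (hγ0 : 0 ≤ γ) (hγ1 : γ < 1) (τ : Fin n → Fin k) {s : Fin n} {a : Fin k}
    (ha : 0 < adv P r γ τ s a) :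
    StrictDominates P r γ τ (Function.update τ s a) := by
  set τ' := Function.update τ s a with hτ'
  have hadv : ∀ s', 0 ≤ adv P r γ τ s' (τ' s') := by
    intro s'
    by_cases hss : s' = s
    · subst hss
      rw [hτ', Function.update_self]
      exact ha.le
    · rw [hτ', Function.update_of_ne hss]
      rw [adv_self hP0 hP1 hγ0 hγ1]
  refine ⟨dom_of_adv_nonneg hn hP0 hP1 hγ0 hγ1 τ τ' hadv, s, ?_⟩
  apply strict_of_adv_pos hn hP0 hP1 hγ0 hγ1 τ τ' hadv
  rw [hτ', Function.update_self]
  exact ha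

/-- F2: a strict single-switch improvement forces a genuinely different action
with positive advantage. -/
lemma adv_pos_of_mem_improvementSet (hn : 1 ≤ n)
    (hP0 : ∀ s a s', 0 ≤ P s a s') (hP1 : ∀ s a, ∑ s', P s a s' = 1)
    (hγ0 : 0 ≤ γ) (hγ1 : γ < 1) (τ : Fin n → Fin k) {s : Fin n} {a : Fin k}
    (ha : StrictDominates P r γ τ (Function.update τ s a)) :
    a ≠ τ s ∧ 0 < adv P r γ τ s a := by
  obtain ⟨hdom, s₁, hlt⟩ := ha
  have hne : a ≠ τ s := by
    intro he
    rw [he, Function.update_eq_self] at hlt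
    exact lt_irrefl _ hlt
  refine ⟨hne, ?_⟩
  by_contra hc
  push_neg at hc
  have hadv : ∀ s', adv P r γ τ s' (Function.update τ s a s') ≤ 0 := by
    intro s'
    by_cases hss : s' = s
    · subst hss
      rw [Function.update_self]
      exact hc
    · rw [Function.update_of_ne hss, adv_self hP0 hP1 hγ0 hγ1]
  have := dom_of_adv_nonpos hn hP0 hP1 hγ0 hγ1 τ _ hadv s₁
  linarith

end Dom

lemma fin2_eq {a b c : Fin 2} (h1 : a ≠ c) (h2 : b ≠ c) : a = b := by
  fin_cases a <;> fin_cases b <;> fin_cases c <;> simp_all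

theorem improvement_states_not_subset_of_k2 (n : ℕ) (hn : 1 ≤ n)
    (P : Fin n → Fin 2 → Fin n → ℝ) (r : Fin n → Fin 2 → ℝ) (γ : ℝ)
    (hP0 : ∀ s a s', 0 ≤ P s a s') (hP1 : ∀ s a, ∑ s', P s a s' = 1)
    (hγ0 : 0 ≤ γ) (hγ1 : γ < 1)
    (π π' : Fin n → Fin 2) (hlt : StrictDominates P r γ π π') :
    ¬ improvementStates P r γ π ⊆ improvementStates P r γ π' := by
  classical
  obtain ⟨hdom, s₀, hs₀⟩ := hlt
  intro hsub
  set σ : Fin n → Fin 2 :=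
    fun s => if s ∈ improvementStates P r γ π' then π s else π' s with hσ
  have hσ1 : ∀ s, s ∈ improvementStates P r γ π' → σ s = π s := by
    intro s hs; simp only [hσ, if_pos hs]
  have hσ2 : ∀ s, s ∉ improvementStates P r γ π' → σ s = π' s := by
    intro s hs; simp only [hσ, if_neg hs]
  -- Step 1: all advantages of σ relative to π are ≤ 0, hence v^σ ≤ v^π
  have h1 : ∀ s, adv P r γ π s (σ s) ≤ 0 := by
    intro s
    by_cases hs : s ∈ improvementStates P r γ π'
    · rw [hσ1 s hs, adv_self hP0 hP1 hγ0 hγ1]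
    · rw [hσ2 s hs]
      by_cases heq : π' s = π s
      · rw [heq, adv_self hP0 hP1 hγ0 hγ1]
      · by_contra hpos
        push_neg at hpos
        have hmem : s ∈ improvementStates P r γ π := by
          exact ⟨π' s, mem_improvementSet_of_adv_pos hn hP0 hP1 hγ0 hγ1 π hpos⟩
        exact hs (hsub hmem)
  -- Step 2: all advantages of σ relative to π' are ≥ 0, hence v^{π'} ≤ v^σ
  have h2 : ∀ s, 0 ≤ adv P r γ π' s (σ s) := by
    intro s
    by_cases hs : s ∈ improvementStates P r γ π'
    · rw [hσ1 s hs]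
      by_cases heq : π s = π' s
      · rw [heq, adv_self hP0 hP1 hγ0 hγ1]
      · obtain ⟨a, ha⟩ := hs
        have ha' : StrictDominates P r γ π' (Function.update π' s a) := ha
        obtain ⟨hane, hapos⟩ :=
          adv_pos_of_mem_improvementSet hn hP0 hP1 hγ0 hγ1 π' ha'
        have : a = π s := fin2_eq hane heq
        rw [← this]
        exact hapos.le
    · rw [hσ2 s hs, adv_self hP0 hP1 hγ0 hγ1]
  have hv1 := dom_of_adv_nonpos hn hP0 hP1 hγ0 hγ1 π σ h1
  have hv2 := dom_of_adv_nonneg hn hP0 hP1 hγ0 hγ1 π' σ h2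
  linarith [hv1 s₀, hv2 s₀]
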